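/- Let K be an ordered exponential field satisfying conditions (i)-(v) above with Γ a set. If Δ is a log-subspace of Γ, then there exists a smallest log-exp-subspace of Γ containing Δ. -/

import Mathlib

open scoped Classical

/-! Ordered exponential fields realized as truncation closed, cross sectional subfields
`K` of a Hahn field `ℝ((t^Γ))`, here `HahnSeries Γᵒᵈ ℝ` (exponents dualized so that the
classical decreasing-exponent series have well-ordered supports; thus an exponent
`γ : Γ` is accessed through `OrderDual.toDual γ`). -/

variable {Γ : Type*} [AddCommGroup Γ] [LinearOrder Γ] [IsOrderedAddMonoid Γ] [Module ℝ Γ]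

/-- A Hahn series is positive when its leading coefficient is positive. -/
def HPosG (h : HahnSeries Γᵒᵈ ℝ) : Prop :=
  ∃ g, 0 < h.coeff g ∧ ∀ g' < g, h.coeff g' = 0

/-- The ordering of the Hahn field. -/
def HLtG (h k : HahnSeries Γᵒᵈ ℝ) : Prop := HPosG (k - h)

/-- Absolute value. -/
noncomputable def HAbs (h : HahnSeries Γᵒᵈ ℝ) : HahnSeries Γᵒᵈ ℝ :=
  if HPosG (-h) then -h else h

/-- `x ≺ y`. -/
def HPrec (x y : HahnSeries Γᵒᵈ ℝ) : Prop := ∀ n : ℕ, HLtG (n • HAbs x) (HAbs y)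

/-- `x ⪯ y`. -/
def HPreceq (x y : HahnSeries Γᵒᵈ ℝ) : Prop := ∃ n : ℕ, HLtG (HAbs x) (n • HAbs y)

/-- Archimedean equivalence `x ≍ y`. -/
def HEquiv (x y : HahnSeries Γᵒᵈ ℝ) : Prop := HPreceq x y ∧ HPreceq y x

/-- `x` is infinite: `x ≻ 1`. -/
def HInf (x : HahnSeries Γᵒᵈ ℝ) : Prop := HPrec 1 x

/-- The monomial `t^γ`. -/
noncomputable def HMono (γ : Γ) : HahnSeries Γᵒᵈ ℝ :=
  HahnSeries.single (OrderDual.toDual γ) 1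

/-- All exponents of `x` lie in `Δ`. -/
def SuppIn (Δ : Set Γ) (x : HahnSeries Γᵒᵈ ℝ) : Prop :=
  ∀ g, x.coeff g ≠ 0 → OrderDual.ofDual g ∈ Δ

/-- `x` is purely infinite: all its exponents are strictly positive. -/
def HPurelyInf (x : HahnSeries Γᵒᵈ ℝ) : Prop :=
  ∀ g, x.coeff g ≠ 0 → 0 < OrderDual.ofDual g

/-- `d` is a truncation (initial segment of terms) of the Hahn series `h`. -/
def IsTruncG (d h : HahnSeries Γᵒᵈ ℝ) : Prop :=
  ∃ U : Set Γ, IsUpperSet U ∧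
    ∀ s : Γ, d.coeff (OrderDual.toDual s) = if s ∈ U then h.coeff (OrderDual.toDual s) else 0

variable (K : Subfield (HahnSeries Γᵒᵈ ℝ)) (expK logK : HahnSeries Γᵒᵈ ℝ → HahnSeries Γᵒᵈ ℝ)

/-- The coefficient field `ℝ_K` of `K`. -/
def RK : Set ℝ := {r : ℝ | HahnSeries.C r ∈ K}

/-- `K` is an ordered exponential field which is a truncation closed, cross sectional
subfield of `ℝ((t^Γ))`, satisfying conditions (i)–(v):  `exp_K` agrees with `e^x` on the
coefficient field and with the exponential power series on infinitesimals, `exp_K x > x^n`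
for positive infinite `x`, and `log_K(t^Γ) = K_PI`. -/
structure GoodExpField : Prop where
  trunc_closed : ∀ x ∈ K, ∀ d, IsTruncG d x → d ∈ K
  cross : ∀ γ : Γ, HMono γ ∈ K
  exp_mem : ∀ x ∈ K, expK x ∈ K
  log_mem : ∀ x ∈ K, HLtG 0 x → logK x ∈ K
  exp_add : ∀ x ∈ K, ∀ y ∈ K, expK (x + y) = expK x * expK y
  exp_pos : ∀ x ∈ K, HLtG 0 (expK x)
  exp_mono : ∀ x ∈ K, ∀ y ∈ K, HLtG x y → HLtG (expK x) (expK y)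
  log_exp : ∀ x ∈ K, logK (expK x) = x
  exp_log : ∀ x ∈ K, HLtG 0 x → expK (logK x) = x
  exp_real : ∀ r : ℝ, HahnSeries.C r ∈ K → expK (HahnSeries.C r) = HahnSeries.C (Real.exp r)
  exp_series : ∀ x ∈ K, HPrec x 1 → x ≠ 0 → ∀ N : ℕ,
    HPrec (expK x - ∑ i ∈ Finset.range (N + 1), ((Nat.factorial i : ℝ)⁻¹) • x ^ i) (x ^ N)
  exp_big : ∀ x ∈ K, HLtG 0 x → HInf x → ∀ n : ℕ, HLtG (x ^ n) (expK x)
  log_pi₁ : ∀ γ : Γ, HPurelyInf (logK (HMono γ))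
  log_pi₂ : ∀ x ∈ K, HPurelyInf x → ∃ γ : Γ, logK (HMono γ) = x

/-- `Δ` is an `ℝ_K`-subspace of `Γ`. -/
def IsRKSubspace (Δ : Set Γ) : Prop :=
  (0 : Γ) ∈ Δ ∧ (∀ a ∈ Δ, ∀ b ∈ Δ, a + b ∈ Δ) ∧ (∀ a ∈ Δ, -a ∈ Δ) ∧
    ∀ r ∈ RK K, ∀ a ∈ Δ, r • a ∈ Δ

/-- `Δ` is a log-subspace of `Γ` : `log_K(t^Δ) ⊆ (K_Δ)_PI`. -/
def IsLogSubspace (Δ : Set Γ) : Prop :=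
  IsRKSubspace K Δ ∧ ∀ γ ∈ Δ,
    logK (HMono γ) ∈ K ∧ SuppIn Δ (logK (HMono γ)) ∧ HPurelyInf (logK (HMono γ))

/-- `Δ` is a log-exp-subspace of `Γ` : `log_K(t^Δ) = (K_Δ)_PI`. -/
def IsLogExpSubspace (Δ : Set Γ) : Prop :=
  IsLogSubspace K logK Δ ∧
    ∀ x ∈ K, SuppIn Δ x → HPurelyInf x → ∃ γ ∈ Δ, logK (HMono γ) = x

/-- `d` is the development of `z` over `K_Δ` (the longest truncation of `z` lying
in `K_Δ`). -/
def IsDevKDelta (Δ : Set Γ) (z d : HahnSeries Γᵒᵈ ℝ) : Prop :=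
  IsTruncG d z ∧ d ∈ K ∧ SuppIn Δ d ∧
    ∀ d', IsTruncG d' z → d' ∈ K → SuppIn Δ d' → IsTruncG d' d


/-- The monomial `t^γ` is positive. -/
lemma hmono_pos (γ : Γ) : HLtG 0 (HMono γ) := by
  refine ⟨OrderDual.toDual γ, ?_, ?_⟩
  · simp [HMono, HahnSeries.coeff_single_same]
  · intro g' hg'
    have : g' ≠ OrderDual.toDual γ := ne_of_lt hg'
    simp [HMono, HahnSeries.coeff_single_of_ne this]

lemma logK_mono_injective (hK : GoodExpField K expK logK) {γ γ' : Γ}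
    (h : logK (HMono γ) = logK (HMono γ')) : γ = γ' := by
  have h1 : expK (logK (HMono γ)) = HMono γ :=
    hK.exp_log _ (hK.cross γ) (hmono_pos γ)
  have h2 : expK (logK (HMono γ')) = HMono γ' :=
    hK.exp_log _ (hK.cross γ') (hmono_pos γ')
  have hm : HMono γ = HMono γ' := by rw [← h1, ← h2, h]
  have := congrArg (fun x : HahnSeries Γᵒᵈ ℝ => x.coeff (OrderDual.toDual γ)) hm
  simp only [HMono, HahnSeries.coeff_single] at this
  by_contra hne
  have hne' : (OrderDual.toDual γ : Γᵒᵈ) ≠ OrderDual.toDual γ' := by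
    simpa using hne
  simp [hne'] at this

lemma univ_logExpSubspace (hK : GoodExpField K expK logK) :
    IsLogExpSubspace K logK (Set.univ : Set Γ) := by
  refine ⟨⟨⟨trivial, fun _ _ _ _ => trivial, fun _ _ => trivial,
      fun _ _ _ _ => trivial⟩, ?_⟩, ?_⟩
  · intro γ _
    exact ⟨hK.log_mem _ (hK.cross γ) (hmono_pos γ), fun g _ => trivial, hK.log_pi₁ γ⟩
  · intro x hx _ hpi
    obtain ⟨γ, hγ⟩ := hK.log_pi₂ x hx hpi
    exact ⟨γ, trivial, hγ⟩

/-- If `Δ` is a log-subspace of `Γ`, then there is a smallest log-exp-subspace of `Γ`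
containing `Δ`. -/
theorem exists_smallest_logExpSubspace
    (hK : GoodExpField K expK logK)
    (Δ : Set Γ) (hΔ : IsLogSubspace K logK Δ) :
    ∃ E : Set Γ, IsLogExpSubspace K logK E ∧ Δ ⊆ E ∧
      ∀ E' : Set Γ, IsLogExpSubspace K logK E' → Δ ⊆ E' → E ⊆ E' := by
  set S : Set (Set Γ) := {E' | IsLogExpSubspace K logK E' ∧ Δ ⊆ E'} with hS
  set E : Set Γ := ⋂₀ S with hE
  have hunivS : (Set.univ : Set Γ) ∈ S :=
    ⟨univ_logExpSubspace K expK logK hK, Set.subset_univ _⟩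
  have hEsub : ∀ E' ∈ S, E ⊆ E' := fun E' hE' => Set.sInter_subset_of_mem hE'
  have hmemE : ∀ γ : Γ, (∀ E' ∈ S, γ ∈ E') → γ ∈ E := by
    intro γ h
    exact Set.mem_sInter.mpr h
  refine ⟨E, ⟨⟨⟨?_, ?_, ?_, ?_⟩, ?_⟩, ?_⟩, ?_, ?_⟩
  · exact hmemE 0 (fun E' hE' => hE'.1.1.1.1)
  · intro a ha b hb
    exact hmemE _ (fun E' hE' => hE'.1.1.1.2.1 a (hEsub E' hE' ha) b (hEsub E' hE' hb))
  · intro a ha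
    exact hmemE _ (fun E' hE' => hE'.1.1.1.2.2.1 a (hEsub E' hE' ha))
  · intro r hr a ha
    exact hmemE _ (fun E' hE' => hE'.1.1.1.2.2.2 r hr a (hEsub E' hE' ha))
  · intro γ hγ
    refine ⟨hK.log_mem _ (hK.cross γ) (hmono_pos γ), ?_, hK.log_pi₁ γ⟩
    intro g hg
    refine hmemE _ (fun E' hE' => ?_)
    exact (hE'.1.1.2 γ (hEsub E' hE' hγ)).2.1 g hg
  · intro x hx hsupp hpi
    obtain ⟨γ₀, hγ₀⟩ := hK.log_pi₂ x hx hpi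
    refine ⟨γ₀, hmemE _ (fun E' hE' => ?_), hγ₀⟩
    have hsupp' : SuppIn E' x := fun g hg => hEsub E' hE' (hsupp g hg)
    obtain ⟨γ', hγ'E, hγ'⟩ := hE'.1.2 x hx hsupp' hpi
    have : γ' = γ₀ := logK_mono_injective K expK logK hK (by rw [hγ', hγ₀])
    exact this ▸ hγ'E
  · intro γ hγ
    exact hmemE _ (fun E' hE' => hE'.2 hγ)
  · intro E' hE' hΔE'
    exact hEsub E' ⟨hE', hΔE'⟩
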